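/- Let μ, V : [0,∞) → ℝ be continuous with V(a) > 0 for all a ≥ 0, let C* > 0 and M₀ ∈ ℝ, and define M*(a) = M₀ · (V(0)/V(a)) · exp(−(1/C*)·∫₀^a μ(u)/V(u) du). Then M*(0) = M₀, the function a ↦ V(a)·M*(a) is differentiable on [0,∞), and for every a ≥ 0 one has C* · (d/da)(V(a)·M*(a)) + μ(a)·M*(a) = 0. -/

import Mathlib

/-- Explicit solution of the stationary transport equation: with
`M*(a) = M₀ (V(0)/V(a)) exp(−(1/C*)∫₀^a μ/V)`, one has `M*(0) = M₀`, the function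
`a ↦ V(a) M*(a)` is differentiable on `[0,∞)` and its derivative `d` satisfies
`C* d + μ(a) M*(a) = 0` at every `a ≥ 0`. -/
theorem stmt5 (μ V : ℝ → ℝ)
    (hμcont : ContinuousOn μ (Set.Ici 0)) (hVcont : ContinuousOn V (Set.Ici 0))
    (hVpos : ∀ a, 0 ≤ a → 0 < V a)
    (Cstar M₀ : ℝ) (hCstar : 0 < Cstar)
    (Mstar : ℝ → ℝ)
    (hMstar : ∀ a, Mstar a =
      M₀ * (V 0 / V a) * Real.exp (-(1 / Cstar) * ∫ u in (0:ℝ)..a, μ u / V u)) :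
    Mstar 0 = M₀ ∧
    ∀ a, 0 ≤ a → ∃ d : ℝ,
      HasDerivWithinAt (fun b => V b * Mstar b) d (Set.Ici 0) a ∧
      Cstar * d + μ a * Mstar a = 0 := by
  have hV0 : V 0 ≠ 0 := (hVpos 0 le_rfl).ne'
  have hfcont : ContinuousOn (fun u => μ u / V u) (Set.Ici 0) :=
    hμcont.div hVcont (fun x hx => (hVpos x hx).ne')
  constructor
  · rw [hMstar 0]
    simp [hV0, div_self hV0]
  · intro a ha
    have hVa : V a ≠ 0 := (hVpos a ha).ne'
    -- integrability on [0, a]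
    have hint : IntervalIntegrable (fun u => μ u / V u) MeasureTheory.volume 0 a :=
      (hfcont.mono (by rw [Set.uIcc_of_le ha]; exact Set.Icc_subset_Ici_self)).intervalIntegrable
    -- derivative of the integral
    have hF : HasDerivWithinAt (fun b => ∫ u in (0:ℝ)..b, μ u / V u) (μ a / V a)
        (Set.Ici 0) a := by
      rcases eq_or_lt_of_le ha with h0 | h0
      · subst h0
        have hmeas0 : StronglyMeasurableAtFilter (fun u => μ u / V u)
            (nhdsWithin 0 (Set.Ioi 0)) :=
          ⟨Set.Ici 0, nhdsWithin_mono 0 Set.Ioi_subset_Ici_self self_mem_nhdsWithin,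
            hfcont.aestronglyMeasurable measurableSet_Ici⟩
        exact intervalIntegral.integral_hasDerivWithinAt_right hint hmeas0
          ((hfcont.continuousWithinAt Set.self_mem_Ici).mono Set.Ioi_subset_Ici_self)
      · have hca : ContinuousAt (fun u => μ u / V u) a :=
          (hfcont.continuousWithinAt ha).continuousAt (Ici_mem_nhds h0)
        have hmeasa : StronglyMeasurableAtFilter (fun u => μ u / V u) (nhds a) :=
          ⟨Set.Ici 0, Ici_mem_nhds h0, hfcont.aestronglyMeasurable measurableSet_Ici⟩
        exact (intervalIntegral.integral_hasDerivAt_right hint hmeasa hca).hasDerivWithinAt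
    -- the function V b * Mstar b equals g b := M₀ * V 0 * exp(...)
    set d : ℝ := M₀ * V 0 * Real.exp (-(1 / Cstar) * ∫ u in (0:ℝ)..a, μ u / V u) *
      (-(1 / Cstar) * (μ a / V a)) with hd
    have hg : HasDerivWithinAt
        (fun b => M₀ * V 0 * Real.exp (-(1 / Cstar) * ∫ u in (0:ℝ)..b, μ u / V u)) d
        (Set.Ici 0) a := by
      have := ((hF.const_mul (-(1 / Cstar))).exp).const_mul (M₀ * V 0)
      convert this using 1
      · rfl
      · rfl
      · rw [hd]; ring
    refine ⟨d, ?_, ?_⟩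
    · refine hg.congr (fun b hb => ?_) ?_
      · have hVb : V b ≠ 0 := (hVpos b hb).ne'
        rw [hMstar b]
        field_simp
      · rw [hMstar a]
        field_simp
    · rw [hMstar a, hd]
      field_simp
      ring
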